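/- arXiv:1708.03021 — 2 statements merged into one kernel-verified Lean document; each statement's English description precedes it below -/
import Mathlib

section
/- Let $\{e_1, e_2, e_3\}$ be a standard Milnor basis of $\mathfrak{su}(2)$ and define $H(u,v) = \exp(-u e_1)\exp(-v e_2)\exp(u e_1)\exp(v e_2)$. Then for all real $u,v$: $H(u,v) = \frac{1}{2}\big((1+\cos u) + \cos v(1-\cos u)\big) I - \big((1-\cos v)\sin u\big) e_1 + \sin v (1-\cos u)\, e_2 + (\sin v \sin u)\, e_3$. -/
open Matrix

attribute [local instance] Matrix.linftyOpNormedRing Matrix.linftyOpNormedAlgebra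

private lemma sq_scalar (M : Matrix (Fin 2) (Fin 2) ℂ) (h : M.trace = 0) :
    M * M = (M 0 0 * M 0 0 + M 0 1 * M 1 0) • (1 : Matrix (Fin 2) (Fin 2) ℂ) := by
  have h11 : M 1 1 = -M 0 0 := by
    simp [Matrix.trace, Fin.sum_univ_two, Matrix.diag] at h
    linear_combination h
  ext i j
  fin_cases i <;> fin_cases j <;>
    simp [Matrix.mul_apply, Fin.sum_univ_two, Matrix.one_apply, h11] <;> ring

private lemma exp_sq_quarter {M : Matrix (Fin 2) (Fin 2) ℂ}
    (h : M * M = (-(4⁻¹) : ℂ) • 1) (t : ℝ) :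
    NormedSpace.exp ((t : ℂ) • M)
      = ((Real.cos (t/2) : ℂ)) • (1 : Matrix (Fin 2) (Fin 2) ℂ)
        + ((2 * Real.sin (t/2) : ℝ) : ℂ) • M := by
  have hJ : ((2:ℂ) • M) * ((2:ℂ) • M) = -1 := by
    rw [smul_mul_assoc, mul_smul_comm, h, smul_smul, smul_smul]
    norm_num
  set φ : ℂ →ₐ[ℝ] Matrix (Fin 2) (Fin 2) ℂ := Complex.liftAux ((2:ℂ) • M) hJ with hφ
  have hcont : Continuous φ := φ.toLinearMap.continuous_of_finiteDimensional
  have h1 : (t : ℂ) • M = φ (((t/2 : ℝ) : ℂ) * Complex.I) := by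
    rw [hφ, Complex.liftAux_apply]
    simp
    match_scalars
    push_cast
    ring
  rw [h1, show NormedSpace.exp (φ (((t/2 : ℝ) : ℂ) * Complex.I)) = φ (NormedSpace.exp (((t/2 : ℝ) : ℂ) * Complex.I)) from
    (NormedSpace.map_exp φ hcont _).symm]
  rw [← Complex.exp_eq_exp_ℂ]
  rw [Complex.exp_mul_I, ← Complex.ofReal_cos, ← Complex.ofReal_sin]
  rw [hφ, Complex.liftAux_apply]
  simp only [Complex.add_re, Complex.add_im, Complex.ofReal_re, Complex.ofReal_im,
    Complex.mul_re, Complex.mul_im, Complex.I_re, Complex.I_im,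
    mul_zero, mul_one, zero_mul, sub_zero, zero_sub, add_zero, zero_add, neg_zero,
    Algebra.algebraMap_eq_smul_one]
  match_scalars <;> (push_cast [Complex.coe_algebraMap]; ring)

theorem milnor_commutator_H_formula
    (e : Fin 3 → Matrix (Fin 2) (Fin 2) ℂ)
    (hskew : ∀ i, (e i)ᴴ = -(e i)) (htr : ∀ i, (e i).trace = 0)
    (hindep : LinearIndependent ℝ e)
    (h12 : e 0 * e 1 - e 1 * e 0 = e 2)
    (h23 : e 1 * e 2 - e 2 * e 1 = e 0)
    (h31 : e 2 * e 0 - e 0 * e 2 = e 1)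
    (u v : ℝ) :
    NormedSpace.exp (-(u : ℂ) • e 0) * NormedSpace.exp (-(v : ℂ) • e 1)
        * NormedSpace.exp ((u : ℂ) • e 0) * NormedSpace.exp ((v : ℂ) • e 1)
      = (((1/2) * ((1 + Real.cos u) + Real.cos v * (1 - Real.cos u)) : ℝ) : ℂ)
          • (1 : Matrix (Fin 2) (Fin 2) ℂ)
        - (((1 - Real.cos v) * Real.sin u : ℝ) : ℂ) • e 0
        + ((Real.sin v * (1 - Real.cos u) : ℝ) : ℂ) • e 1
        + ((Real.sin v * Real.sin u : ℝ) : ℂ) • e 2 := by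
  set x := e 0 with hx
  set y := e 1 with hy
  set z := e 2 with hz
  -- squares are scalars
  obtain ⟨α, hx2⟩ : ∃ a : ℂ, x * x = a • (1 : Matrix (Fin 2) (Fin 2) ℂ) :=
    ⟨_, sq_scalar x (htr 0)⟩
  obtain ⟨β, hy2⟩ : ∃ a : ℂ, y * y = a • (1 : Matrix (Fin 2) (Fin 2) ℂ) :=
    ⟨_, sq_scalar y (htr 1)⟩
  obtain ⟨γ, hz2⟩ : ∃ a : ℂ, z * z = a • (1 : Matrix (Fin 2) (Fin 2) ℂ) :=
    ⟨_, sq_scalar z (htr 2)⟩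
  -- anticommutation
  have hxz0 : x * z + z * x = 0 := by
    have h1 : x * z + z * x = x * x * y - y * (x * x) := by rw [← h12]; noncomm_ring
    rw [h1, hx2]; simp [smul_mul_assoc, mul_smul_comm]
  have hxy0 : x * y + y * x = 0 := by
    have h1 : x * y + y * x = z * (x * x) - x * x * z := by rw [← h31]; noncomm_ring
    rw [h1, hx2]; simp [smul_mul_assoc, mul_smul_comm]
  have hyz0 : y * z + z * y = 0 := by
    have h1 : y * z + z * y = x * (y * y) - y * y * x := by rw [← h12]; noncomm_ring
    rw [h1, hy2]; simp [smul_mul_assoc, mul_smul_comm]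
  have hyx : y * x = -(x * y) := eq_neg_of_add_eq_zero_right hxy0
  have hzy : z * y = -(y * z) := eq_neg_of_add_eq_zero_right hyz0
  have hxz : x * z = -(z * x) := eq_neg_of_add_eq_zero_left hxz0
  -- half products
  have hxy : x * y = (2⁻¹ : ℂ) • z := by
    have h' : x * y + x * y = z := by rw [← h12, hyx, sub_neg_eq_add]
    rw [← h']; module
  have hyx' : y * x = (-2⁻¹ : ℂ) • z := by rw [hyx, hxy]; module
  have hyz : y * z = (2⁻¹ : ℂ) • x := by
    have h' : y * z + y * z = x := by rw [← h23, hzy, sub_neg_eq_add]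
    rw [← h']; module
  have hzy' : z * y = (-2⁻¹ : ℂ) • x := by rw [hzy, hyz]; module
  have hzx : z * x = (2⁻¹ : ℂ) • y := by
    have h' : z * x + z * x = y := by rw [← h31, hxz, sub_neg_eq_add]
    rw [← h']; module
  have hxz' : x * z = (-2⁻¹ : ℂ) • y := by rw [hxz, hzx]; module
  -- determine the scalars
  have hxne : x ≠ 0 := hindep.ne_zero 0
  have hyne : y ≠ 0 := hindep.ne_zero 1
  have hzne : z ≠ 0 := hindep.ne_zero 2
  have hscal : ∀ (a : ℂ) (M : Matrix (Fin 2) (Fin 2) ℂ), M ≠ 0 →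
      a • M = (-(4⁻¹) : ℂ) • M → a = -(4⁻¹) := by
    intro a M hM hEq
    have : (a - -(4⁻¹)) • M = 0 := by rw [sub_smul, hEq, sub_self]
    rcases smul_eq_zero.mp this with h | h
    · linear_combination h
    · exact absurd h hM
  have hα : α = -(4⁻¹ : ℂ) := by
    refine hscal α y hyne ?_
    have : x * (x * y) = (x * x) * y := (mul_assoc _ _ _).symm
    rw [hxy, mul_smul_comm, hxz', smul_smul, hx2, smul_mul_assoc, one_mul] at this
    rw [← this]; congr 1; norm_num
  have hβ : β = -(4⁻¹ : ℂ) := by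
    refine hscal β z hzne ?_
    have : y * (y * z) = (y * y) * z := (mul_assoc _ _ _).symm
    rw [hyz, mul_smul_comm, hyx', smul_smul, hy2, smul_mul_assoc, one_mul] at this
    rw [← this]; congr 1; norm_num
  have hγ : γ = -(4⁻¹ : ℂ) := by
    refine hscal γ x hxne ?_
    have : z * (z * x) = (z * z) * x := (mul_assoc _ _ _).symm
    rw [hzx, mul_smul_comm, hzy', smul_smul, hz2, smul_mul_assoc, one_mul] at this
    rw [← this]; congr 1; norm_num
  rw [hα] at hx2; rw [hβ] at hy2; rw [hγ] at hz2
  -- exponentials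
  have E1 : NormedSpace.exp (-(u : ℂ) • x)
      = ((Real.cos (u/2) : ℂ)) • (1 : Matrix (Fin 2) (Fin 2) ℂ)
        + ((-(2 * Real.sin (u/2)) : ℝ) : ℂ) • x := by
    have := exp_sq_quarter hx2 (-u)
    rw [show ((-u : ℝ) : ℂ) = -(u : ℂ) by push_cast; ring] at this
    rw [this, neg_div, Real.cos_neg, Real.sin_neg]
    push_cast; ring_nf
  have E2 : NormedSpace.exp (-(v : ℂ) • y)
      = ((Real.cos (v/2) : ℂ)) • (1 : Matrix (Fin 2) (Fin 2) ℂ)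
        + ((-(2 * Real.sin (v/2)) : ℝ) : ℂ) • y := by
    have := exp_sq_quarter hy2 (-v)
    rw [show ((-v : ℝ) : ℂ) = -(v : ℂ) by push_cast; ring] at this
    rw [this, neg_div, Real.cos_neg, Real.sin_neg]
    push_cast; ring_nf
  have E3 : NormedSpace.exp ((u : ℂ) • x)
      = ((Real.cos (u/2) : ℂ)) • (1 : Matrix (Fin 2) (Fin 2) ℂ)
        + ((2 * Real.sin (u/2) : ℝ) : ℂ) • x := exp_sq_quarter hx2 u
  have E4 : NormedSpace.exp ((v : ℂ) • y)
      = ((Real.cos (v/2) : ℂ)) • (1 : Matrix (Fin 2) (Fin 2) ℂ)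
        + ((2 * Real.sin (v/2) : ℝ) : ℂ) • y := exp_sq_quarter hy2 v
  rw [E1, E2, E3, E4]
  -- half-angle identities
  have hcu : Real.cos u = 2 * Real.cos (u/2) ^ 2 - 1 := by
    have h := Real.cos_two_mul (u/2)
    rw [show 2 * (u/2) = u by ring] at h
    exact h
  have hsu : Real.sin u = 2 * Real.sin (u/2) * Real.cos (u/2) := by
    have h := Real.sin_two_mul (u/2)
    rw [show 2 * (u/2) = u by ring] at h
    exact h
  have hcv : Real.cos v = 2 * Real.cos (v/2) ^ 2 - 1 := by
    have h := Real.cos_two_mul (v/2)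
    rw [show 2 * (v/2) = v by ring] at h
    exact h
  have hsv : Real.sin v = 2 * Real.sin (v/2) * Real.cos (v/2) := by
    have h := Real.sin_two_mul (v/2)
    rw [show 2 * (v/2) = v by ring] at h
    exact h
  have hqu : Complex.sin ((u:ℂ)/2) ^ 2 + Complex.cos ((u:ℂ)/2) ^ 2 = 1 :=
    Complex.sin_sq_add_cos_sq _
  have hqv : Complex.sin ((v:ℂ)/2) ^ 2 + Complex.cos ((v:ℂ)/2) ^ 2 = 1 :=
    Complex.sin_sq_add_cos_sq _
  rw [hcu, hsu, hcv, hsv]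
  simp only [mul_add, add_mul, smul_mul_assoc, mul_smul_comm, smul_smul,
    one_mul, mul_one, hxy, hyx', hyz, hzy', hzx, hxz', hx2, hy2, hz2]
  match_scalars <;> push_cast
  · linear_combination (Complex.cos ((v:ℂ)/2) ^ 2 - Complex.sin ((v:ℂ)/2) ^ 2) * hqu
      + (2 * Complex.cos ((u:ℂ)/2) ^ 2 - 1) * hqv
  · linear_combination (-4 * Complex.cos ((u:ℂ)/2) * Complex.sin ((u:ℂ)/2)) * hqv
  · linear_combination (4 * Complex.cos ((v:ℂ)/2) * Complex.sin ((v:ℂ)/2)) * hqu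
  · ring
end

section
/- Fix reals $0 < a_1 \leq a_2 \leq a_3$ and define $\overline{V}(r)$ piecewise by: $\overline{V}(r) = (a_1 a_2 a_3)^{-1} r^3$ for $0 \leq r \leq a_1 a_2/a_3$; $\overline{V}(r) = (a_1 a_2)^{-2} r^4$ for $a_1 a_2/a_3 \leq r \leq a_1$; $\overline{V}(r) = a_2^{-2} r^2$ for $a_1 \leq r \leq a_2$; and $\overline{V}(r) = 1$ for $r \geq a_2$. Then for every $r \geq 0$ and every $k \geq 1$, $\overline{V}(k r) \leq k^4\, \overline{V}(r)$. -/
set_option maxHeartbeats 2000000 in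
theorem Vbar_doubling
    (a1 a2 a3 : ℝ) (h0 : 0 < a1) (h12 : a1 ≤ a2) (h23 : a2 ≤ a3)
    (V : ℝ → ℝ)
    (hV1 : ∀ r, 0 ≤ r → r ≤ a1 * a2 / a3 → V r = (a1 * a2 * a3)⁻¹ * r ^ 3)
    (hV2 : ∀ r, a1 * a2 / a3 ≤ r → r ≤ a1 → V r = ((a1 * a2) ^ 2)⁻¹ * r ^ 4)
    (hV3 : ∀ r, a1 ≤ r → r ≤ a2 → V r = (a2 ^ 2)⁻¹ * r ^ 2)
    (hV4 : ∀ r, a2 ≤ r → V r = 1) :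
    ∀ r k : ℝ, 0 ≤ r → 1 ≤ k → V (k * r) ≤ k ^ 4 * V r := by
  have ha2 : 0 < a2 := lt_of_lt_of_le h0 h12
  have ha3 : 0 < a3 := lt_of_lt_of_le ha2 h23
  have hb0 : 0 < a1 * a2 / a3 := div_pos (mul_pos h0 ha2) ha3
  have key : ∀ s t : ℝ, 0 < s → s ≤ t → V t * s ^ 4 ≤ V s * t ^ 4 := by
    intro s t hs hst
    have ht : 0 < t := lt_of_lt_of_le hs hst
    rcases le_total s (a1 * a2 / a3) with h1 | h1
    · -- s in region 1
      rw [hV1 s hs.le h1]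
      have h1' : s * a3 ≤ a1 * a2 := (le_div_iff₀ ha3).mp h1
      rcases le_total t (a1 * a2 / a3) with h2 | h2
      · rw [hV1 t ht.le h2]
        have c : t ^ 3 * s ^ 4 ≤ s ^ 3 * t ^ 4 := by nlinarith [mul_pos (mul_pos hs hs) (mul_pos hs (mul_pos ht (mul_pos ht ht)))]
        have : (0:ℝ) < (a1 * a2 * a3)⁻¹ := by positivity
        nlinarith
      · rcases le_total t a1 with h3 | h3
        · rw [hV2 t h2 h3]
          field_simp
          nlinarith [pow_pos ht 4, mul_le_mul_of_nonneg_left h1' (by positivity : (0:ℝ) ≤ s^3 * t^4 * a1 * a2)]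
        · rcases le_total t a2 with h4 | h4
          · rw [hV3 t h3 h4]
            field_simp
            -- t^2 * s^4 * (a1*a2*a3) ≤ s^3 * t^4 * a2^2
            have e1 : s * (a1 * a2 * a3) ≤ a1 * a1 * a2 * a2 := by
              nlinarith [mul_le_mul_of_nonneg_left h1' (le_of_lt (mul_pos h0 ha2))]
            have e2 : a1 * a1 ≤ t ^ 2 := by nlinarith
            nlinarith [mul_le_mul_of_nonneg_left e1 (by positivity : (0:ℝ) ≤ s^3 * t^2),
              mul_le_mul_of_nonneg_left e2 (by positivity : (0:ℝ) ≤ s^3 * t^2 * a2 * a2)]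
          · rw [hV4 t h4]
            field_simp
            -- s^4 * (a1*a2*a3) ≤ s^3 * t^4
            have e1 : s * (a1 * a2 * a3) ≤ a1 * a1 * a2 * a2 := by
              nlinarith [mul_le_mul_of_nonneg_left h1' (le_of_lt (mul_pos h0 ha2))]
            have e0 : a1 * a2 ≤ t ^ 2 := by nlinarith
            have e2 : a1 * a1 * a2 * a2 ≤ t ^ 4 := by
              nlinarith [mul_le_mul e0 e0 (le_of_lt (mul_pos h0 ha2)) (by positivity : (0:ℝ) ≤ t ^ 2)]
            nlinarith [mul_le_mul_of_nonneg_left e1 (by positivity : (0:ℝ) ≤ s^3),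
              mul_le_mul_of_nonneg_left e2 (by positivity : (0:ℝ) ≤ s^3)]
    · -- s ≥ b
      rcases le_total s a1 with h1a | h1a
      · rw [hV2 s h1 h1a]
        have h1t : a1 * a2 / a3 ≤ t := le_trans h1 hst
        rcases le_total t a1 with h3 | h3
        · rw [hV2 t h1t h3]
          exact le_of_eq (by ring)
        · rcases le_total t a2 with h4 | h4
          · rw [hV3 t h3 h4]
            field_simp
            -- t^2 * s^4 * (a1*a2)^2 ≤ s^4 * t^4 * a2^2
            have e2 : a1 * a1 ≤ t ^ 2 := by nlinarith
            nlinarith [mul_le_mul_of_nonneg_left e2 (by positivity : (0:ℝ) ≤ s^4 * t^2 * a2^2)]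
          · rw [hV4 t h4]
            field_simp
            -- s^4 * (a1*a2)^2 ≤ s^4 * t^4
            have e0 : a1 * a2 ≤ t ^ 2 := by nlinarith
            have e2 : (a1 * a2) ^ 2 ≤ t ^ 4 := by
              nlinarith [mul_le_mul e0 e0 (le_of_lt (mul_pos h0 ha2)) (by positivity : (0:ℝ) ≤ t ^ 2)]
            nlinarith [mul_le_mul_of_nonneg_left e2 (by positivity : (0:ℝ) ≤ s^4)]
      · rcases le_total s a2 with h1b | h1b
        · rw [hV3 s h1a h1b]
          have h3t : a1 ≤ t := le_trans h1a hst
          rcases le_total t a2 with h4 | h4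
          · rw [hV3 t h3t h4]
            have hs2 : s ^ 2 ≤ t ^ 2 := pow_le_pow_left₀ hs.le hst 2
            have c : t ^ 2 * s ^ 4 ≤ s ^ 2 * t ^ 4 := by
              nlinarith [mul_le_mul_of_nonneg_left hs2 (by positivity : (0:ℝ) ≤ s ^ 2 * t ^ 2)]
            have : (0:ℝ) < (a2 ^ 2)⁻¹ := by positivity
            nlinarith
          · rw [hV4 t h4]
            field_simp
            -- s^4 * a2^2 ≤ s^2 * t^4
            have e0 : s * a2 ≤ t ^ 2 := by nlinarith
            have e1 : s ^ 2 * a2 ^ 2 ≤ t ^ 4 := by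
              nlinarith [mul_le_mul e0 e0 (le_of_lt (mul_pos hs ha2)) (by positivity : (0:ℝ) ≤ t ^ 2)]
            nlinarith [mul_le_mul_of_nonneg_left e1 (by positivity : (0:ℝ) ≤ s^2)]
        · rw [hV4 s h1b, hV4 t (le_trans h1b hst)]
          have : s ^ 4 ≤ t ^ 4 := pow_le_pow_left₀ hs.le hst 4
          linarith
  intro r k hr hk
  rcases eq_or_lt_of_le hr with hr0 | hr0
  · have : (0:ℝ) ≤ a1 * a2 / a3 := hb0.le
    rw [← hr0, mul_zero, hV1 0 le_rfl this]
    simp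
  · have hst : r ≤ k * r := by nlinarith
    have h := key r (k * r) hr0 hst
    have hr4 : (0:ℝ) < r ^ 4 := by positivity
    have : V (k * r) * r ^ 4 ≤ k ^ 4 * V r * r ^ 4 := by
      calc V (k * r) * r ^ 4 ≤ V r * (k * r) ^ 4 := h
        _ = k ^ 4 * V r * r ^ 4 := by ring
    exact le_of_mul_le_mul_right this hr4
end
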